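/- Let n, p, q be positive natural numbers and λ > 0, μ > 0, α > 0 with α ≥ μ, T ≥ 0, G ≥ 0. Let A, Bw, C, D, M : ℝ → (real matrices of sizes n×n, n×p, q×n, q×p, n×n respectively) be matrix-valued functions, where M(t) is symmetric positive definite for all t ∈ [0,T] and is differentiable with derivative M'(t). Let δx : ℝ → ℝⁿ be differentiable with δx'(t) = A(t)·δx(t) + Bw(t)·δw(t) for a function δw : ℝ → ℝᵖ with ‖δw(t)‖² ≤ G on [0,T], and define δz(t) = C(t)·δx(t) + D(t)·δw(t). Suppose for every t ∈ [0,T]: (i) the block matrix [[M(t)A(t) + A(t)ᵀM(t) + M'(t) + λ·M(t), M(t)Bw(t)], [Bw(t)ᵀM(t), −μ·I_p]] is negative semidefinite, and (ii) the block matrix [[λ·M(t), 0, C(t)ᵀ], [0, (α−μ)·I_p, D(t)ᵀ], [C(t), D(t), α·I_q]] is positive semidefinite. Then for all t ∈ [0,T], ‖δz(t)‖² ≤ α²·G + α·λ·(δx(0)ᵀ M(0) δx(0)). -/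

import Mathlib

open Matrix

lemma quadBlock {m l : Type*} [Fintype m] [Fintype l]
    (B11 : Matrix m m ℝ) (B12 : Matrix m l ℝ) (B21 : Matrix l m ℝ) (B22 : Matrix l l ℝ)
    (x : m → ℝ) (y : l → ℝ) :
    Sum.elim x y ⬝ᵥ (fromBlocks B11 B12 B21 B22 *ᵥ Sum.elim x y) =
    x ⬝ᵥ (B11 *ᵥ x) + x ⬝ᵥ (B12 *ᵥ y) + y ⬝ᵥ (B21 *ᵥ x) + y ⬝ᵥ (B22 *ᵥ y) := by
  rw [fromBlocks_mulVec]
  simp [sumElim_dotProduct_sumElim, dotProduct_add]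
  ring

lemma dot_transpose {m l : Type*} [Fintype m] [Fintype l]
    (A : Matrix m l ℝ) (x : l → ℝ) (u : m → ℝ) :
    x ⬝ᵥ (Aᵀ *ᵥ u) = (A *ᵥ x) ⬝ᵥ u := by
  rw [dotProduct_mulVec, vecMul_transpose]

/-- The 3×3 block matrix on the index type `Fin n ⊕ (Fin p ⊕ Fin q)`. -/
def blk3 {n p q : ℕ}
    (A11 : Matrix (Fin n) (Fin n) ℝ) (A12 : Matrix (Fin n) (Fin p) ℝ)
    (A13 : Matrix (Fin n) (Fin q) ℝ)
    (A21 : Matrix (Fin p) (Fin n) ℝ) (A22 : Matrix (Fin p) (Fin p) ℝ)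
    (A23 : Matrix (Fin p) (Fin q) ℝ)
    (A31 : Matrix (Fin q) (Fin n) ℝ) (A32 : Matrix (Fin q) (Fin p) ℝ)
    (A33 : Matrix (Fin q) (Fin q) ℝ) :
    Matrix (Fin n ⊕ (Fin p ⊕ Fin q)) (Fin n ⊕ (Fin p ⊕ Fin q)) ℝ :=
  Matrix.fromBlocks A11 (Matrix.of fun i j => Sum.elim (A12 i) (A13 i) j)
    (Matrix.of fun i j => Sum.elim (fun ip => A21 ip j) (fun iq => A31 iq j) i)
    (Matrix.fromBlocks A22 A23 A32 A33)

lemma quadBlk3 {n p q : ℕ}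
    (A11 : Matrix (Fin n) (Fin n) ℝ) (A12 : Matrix (Fin n) (Fin p) ℝ)
    (A13 : Matrix (Fin n) (Fin q) ℝ)
    (A21 : Matrix (Fin p) (Fin n) ℝ) (A22 : Matrix (Fin p) (Fin p) ℝ)
    (A23 : Matrix (Fin p) (Fin q) ℝ)
    (A31 : Matrix (Fin q) (Fin n) ℝ) (A32 : Matrix (Fin q) (Fin p) ℝ)
    (A33 : Matrix (Fin q) (Fin q) ℝ)
    (x : Fin n → ℝ) (w : Fin p → ℝ) (y : Fin q → ℝ) :
    Sum.elim x (Sum.elim w y) ⬝ᵥ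
      (blk3 A11 A12 A13 A21 A22 A23 A31 A32 A33 *ᵥ Sum.elim x (Sum.elim w y)) =
    x ⬝ᵥ (A11 *ᵥ x) + x ⬝ᵥ (A12 *ᵥ w) + x ⬝ᵥ (A13 *ᵥ y) +
    w ⬝ᵥ (A21 *ᵥ x) + w ⬝ᵥ (A22 *ᵥ w) + w ⬝ᵥ (A23 *ᵥ y) +
    y ⬝ᵥ (A31 *ᵥ x) + y ⬝ᵥ (A32 *ᵥ w) + y ⬝ᵥ (A33 *ᵥ y) := by
  unfold blk3
  rw [quadBlock]
  have e1 : (Matrix.of fun i j => Sum.elim (A12 i) (A13 i) j) *ᵥ Sum.elim w y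
      = A12 *ᵥ w + A13 *ᵥ y := by
    ext i; simp [mulVec, dotProduct, Fintype.sum_sum_type]
  have e2 : (Matrix.of fun i j => Sum.elim (fun ip => A21 ip j) (fun iq => A31 iq j) i) *ᵥ x
      = Sum.elim (A21 *ᵥ x) (A31 *ᵥ x) := by
    ext i; cases i <;> simp [mulVec, dotProduct]
  rw [e1, e2, quadBlock, sumElim_dotProduct_sumElim, dotProduct_add]
  ring

set_option maxHeartbeats 1600000 in
theorem stmt2 (n p q : ℕ) (hn : 0 < n) (hp : 0 < p) (hq : 0 < q)
    (lam mu alp T G : ℝ) (hlam : 0 < lam) (hmu : 0 < mu) (halp : 0 < alp)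
    (hma : mu ≤ alp) (hT : 0 ≤ T) (hG : 0 ≤ G)
    (A : ℝ → Matrix (Fin n) (Fin n) ℝ) (Bw : ℝ → Matrix (Fin n) (Fin p) ℝ)
    (C : ℝ → Matrix (Fin q) (Fin n) ℝ) (D : ℝ → Matrix (Fin q) (Fin p) ℝ)
    (M M' : ℝ → Matrix (Fin n) (Fin n) ℝ)
    (hMpd : ∀ t ∈ Set.Icc (0 : ℝ) T, (M t).PosDef)
    (hMderiv : ∀ t ∈ Set.Icc (0 : ℝ) T, ∀ i j,
      HasDerivAt (fun s => M s i j) (M' t i j) t)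
    (δx : ℝ → Fin n → ℝ) (δw : ℝ → Fin p → ℝ) (δz : ℝ → Fin q → ℝ)
    (hδx : ∀ t ∈ Set.Icc (0 : ℝ) T, ∀ i,
      HasDerivAt (fun s => δx s i) ((A t *ᵥ δx t + Bw t *ᵥ δw t) i) t)
    (hδw : ∀ t ∈ Set.Icc (0 : ℝ) T, (δw t) ⬝ᵥ (δw t) ≤ G)
    (hδz : ∀ t, δz t = C t *ᵥ δx t + D t *ᵥ δw t)
    (h1 : ∀ t ∈ Set.Icc (0 : ℝ) T,
      (-(Matrix.fromBlocks
          (M t * A t + (A t)ᵀ * M t + M' t + lam • M t) (M t * Bw t)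
          ((Bw t)ᵀ * M t) (-(mu • (1 : Matrix (Fin p) (Fin p) ℝ))))).PosSemidef)
    (h2 : ∀ t ∈ Set.Icc (0 : ℝ) T,
      (blk3 (lam • M t) 0 (C t)ᵀ
            0 ((alp - mu) • (1 : Matrix (Fin p) (Fin p) ℝ)) (D t)ᵀ
            (C t) (D t) (alp • (1 : Matrix (Fin q) (Fin q) ℝ))).PosSemidef) :
    ∀ t ∈ Set.Icc (0 : ℝ) T,
      (δz t) ⬝ᵥ (δz t) ≤ alp ^ 2 * G + alp * lam * ((δx 0) ⬝ᵥ (M 0 *ᵥ δx 0)) := by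
  have h0T : (0 : ℝ) ∈ Set.Icc (0 : ℝ) T := ⟨le_refl 0, hT⟩
  set V : ℝ → ℝ := fun s => δx s ⬝ᵥ (M s *ᵥ δx s) with hVdef
  set Vd : ℝ → ℝ := fun s => (A s *ᵥ δx s + Bw s *ᵥ δw s) ⬝ᵥ (M s *ᵥ δx s)
    + δx s ⬝ᵥ (M' s *ᵥ δx s)
    + δx s ⬝ᵥ (M s *ᵥ (A s *ᵥ δx s + Bw s *ᵥ δw s)) with hVddef
  set c : ℝ := mu * G / lam with hcdef
  have hc0 : 0 ≤ c := by positivity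
  have hlc : lam * c = mu * G := by rw [hcdef]; field_simp
  -- symmetry of M
  have hsym : ∀ s ∈ Set.Icc (0 : ℝ) T, ∀ u v : Fin n → ℝ,
      u ⬝ᵥ (M s *ᵥ v) = v ⬝ᵥ (M s *ᵥ u) := by
    intro s hs u v
    have hM : (M s)ᵀ = M s := by have h := (hMpd s hs).1; rwa [Matrix.IsHermitian, conjTranspose_eq_transpose_of_trivial] at h
    calc u ⬝ᵥ (M s *ᵥ v) = (u ᵥ* M s) ⬝ᵥ v := dotProduct_mulVec u (M s) v
      _ = ((M s)ᵀ *ᵥ u) ⬝ᵥ v := by rw [mulVec_transpose]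
      _ = (M s *ᵥ u) ⬝ᵥ v := by rw [hM]
      _ = v ⬝ᵥ (M s *ᵥ u) := dotProduct_comm _ _
  -- derivative of V
  have hVd : ∀ s ∈ Set.Icc (0 : ℝ) T, HasDerivAt V (Vd s) s := by
    intro s hs
    have h : HasDerivAt (fun u => ∑ i : Fin n, ∑ j : Fin n, δx u i * (M u i j * δx u j))
        (∑ i : Fin n, ∑ j : Fin n,
          ((A s *ᵥ δx s + Bw s *ᵥ δw s) i * (M s i j * δx s j)
            + δx s i * (M' s i j * δx s j + M s i j * (A s *ᵥ δx s + Bw s *ᵥ δw s) j))) s := by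
      refine HasDerivAt.fun_sum fun i _ => HasDerivAt.fun_sum fun j _ =>
        ((hδx s hs i).mul ((hMderiv s hs i j).mul (hδx s hs j)))
    convert h using 1
    · funext u
      simp [hVdef, dotProduct, mulVec, Finset.mul_sum, mul_assoc]
    · simp only [hVddef, dotProduct, mulVec, Pi.add_apply, Finset.mul_sum]
      rw [← Finset.sum_add_distrib, ← Finset.sum_add_distrib]
      apply Finset.sum_congr rfl
      intro i _
      rw [← Finset.sum_add_distrib, ← Finset.sum_add_distrib]
      apply Finset.sum_congr rfl
      intro j _
      ring
  -- differential inequality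
  have key1 : ∀ s ∈ Set.Icc (0 : ℝ) T, Vd s + lam * V s ≤ mu * G := by
    intro s hs
    have hq := (h1 s hs).dotProduct_mulVec_nonneg (Sum.elim (δx s) (δw s))
    rw [star_trivial, neg_mulVec, dotProduct_neg] at hq
    rw [quadBlock] at hq
    have hq' : δx s ⬝ᵥ ((M s * A s + (A s)ᵀ * M s + M' s + lam • M s) *ᵥ δx s)
        + δx s ⬝ᵥ ((M s * Bw s) *ᵥ δw s)
        + δw s ⬝ᵥ (((Bw s)ᵀ * M s) *ᵥ δx s)
        + δw s ⬝ᵥ ((-(mu • (1 : Matrix (Fin p) (Fin p) ℝ))) *ᵥ δw s) ≤ 0 := by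
      linarith [hq]
    rw [add_mulVec, add_mulVec, add_mulVec] at hq'
    rw [← mulVec_mulVec (δx s) (M s) (A s), ← mulVec_mulVec (δx s) ((A s)ᵀ) (M s),
      ← mulVec_mulVec (δw s) (M s) (Bw s), ← mulVec_mulVec (δx s) ((Bw s)ᵀ) (M s)] at hq'
    rw [smul_mulVec, neg_mulVec, smul_mulVec, one_mulVec] at hq'
    rw [dotProduct_add, dotProduct_add, dotProduct_add, dotProduct_smul,
      dotProduct_neg, dotProduct_smul] at hq'
    rw [dot_transpose (A s), dot_transpose (Bw s)] at hq'
    -- now relate with Vd, V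
    have e3 : δx s ⬝ᵥ (M s *ᵥ (A s *ᵥ δx s + Bw s *ᵥ δw s))
        = (A s *ᵥ δx s + Bw s *ᵥ δw s) ⬝ᵥ (M s *ᵥ δx s) := hsym s hs _ _
    have e4 : (A s *ᵥ δx s + Bw s *ᵥ δw s) ⬝ᵥ (M s *ᵥ δx s)
        = (A s *ᵥ δx s) ⬝ᵥ (M s *ᵥ δx s) + (Bw s *ᵥ δw s) ⬝ᵥ (M s *ᵥ δx s) :=
      add_dotProduct _ _ _
    have e5 : δx s ⬝ᵥ (M s *ᵥ (A s *ᵥ δx s)) = (A s *ᵥ δx s) ⬝ᵥ (M s *ᵥ δx s) :=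
      hsym s hs _ _
    have e6 : δx s ⬝ᵥ (M s *ᵥ (Bw s *ᵥ δw s)) = (Bw s *ᵥ δw s) ⬝ᵥ (M s *ᵥ δx s) :=
      hsym s hs _ _
    have hwG := mul_le_mul_of_nonneg_left (hδw s hs) hmu.le
    simp only [smul_eq_mul] at hq'
    simp only [hVddef, hVdef, smul_eq_mul]
    linarith [hq', e3, e4, e5, e6, hwG]
  -- Gronwall-type bound
  have hVt0 : ∀ s ∈ Set.Icc (0 : ℝ) T, V s ≤ V 0 + c := by
    intro s hs
    set W : ℝ → ℝ := fun u => Real.exp (lam * u) * (V u - c) with hWdef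
    have hWd : ∀ u ∈ Set.Icc (0 : ℝ) T, HasDerivAt W
        (Real.exp (lam * u) * lam * (V u - c) + Real.exp (lam * u) * Vd u) u := by
      intro u hu
      have he : HasDerivAt (fun r => Real.exp (lam * r)) (Real.exp (lam * u) * lam) u := by
        simpa [mul_comm] using ((hasDerivAt_id u).const_mul lam).exp
      exact he.mul ((hVd u hu).sub_const c)
    have hanti : AntitoneOn W (Set.Icc 0 T) := by
      apply antitoneOn_of_deriv_nonpos (convex_Icc 0 T)
      · exact fun u hu => (hWd u hu).continuousAt.continuousWithinAt
      · intro u hu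
        rw [interior_Icc] at hu
        exact ((hWd u ⟨hu.1.le, hu.2.le⟩).differentiableAt).differentiableWithinAt
      · intro u hu
        rw [interior_Icc] at hu
        have hu' : u ∈ Set.Icc (0 : ℝ) T := ⟨hu.1.le, hu.2.le⟩
        rw [(hWd u hu').deriv]
        have h0 : lam * (V u - c) + Vd u ≤ 0 := by
          have hk := key1 u hu'
          have he : lam * (V u - c) = lam * V u - mu * G := by rw [mul_sub, hlc]
          linarith
        have : Real.exp (lam * u) * lam * (V u - c) + Real.exp (lam * u) * Vd u
            = Real.exp (lam * u) * (lam * (V u - c) + Vd u) := by ring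
        rw [this]
        exact mul_nonpos_of_nonneg_of_nonpos (Real.exp_nonneg _) h0
    have hWle : W s ≤ W 0 := hanti h0T hs hs.1
    have hW0 : W 0 = V 0 - c := by simp [hWdef]
    have hexp1 : 1 ≤ Real.exp (lam * s) := by
      exact Real.one_le_exp (mul_nonneg hlam.le hs.1)
    have hV0 : 0 ≤ V 0 := by
      have := (hMpd 0 h0T).posSemidef.dotProduct_mulVec_nonneg (δx 0)
      simpa [hVdef] using this
    rw [hW0] at hWle
    have hWle' : Real.exp (lam * s) * (V s - c) ≤ V 0 - c := hWle
    by_cases hcase : V s - c ≤ 0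
    · linarith
    · push_neg at hcase
      have : V s - c ≤ Real.exp (lam * s) * (V s - c) := by
        nlinarith
      linarith [hWle']
  -- final bound from h2
  intro t ht
  set x := δx t
  set w := δw t
  set z := δz t with hzdef
  set y : Fin q → ℝ := (-(1 / alp)) • z with hydef
  have hq2 := (h2 t ht).dotProduct_mulVec_nonneg (Sum.elim x (Sum.elim w y))
  rw [star_trivial, quadBlk3] at hq2
  simp only [smul_mulVec, zero_mulVec, dotProduct_zero, one_mulVec,
    dotProduct_smul, smul_eq_mul, dot_transpose] at hq2
  have hz : z = C t *ᵥ x + D t *ᵥ w := hδz t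
  have hcx : (C t *ᵥ x) ⬝ᵥ y = -(1/alp) * ((C t *ᵥ x) ⬝ᵥ z) := by
    rw [hydef, dotProduct_smul, smul_eq_mul]
  have hdx : (D t *ᵥ w) ⬝ᵥ y = -(1/alp) * ((D t *ᵥ w) ⬝ᵥ z) := by
    rw [hydef, dotProduct_smul, smul_eq_mul]
  have hycx : y ⬝ᵥ (C t *ᵥ x) = -(1/alp) * ((C t *ᵥ x) ⬝ᵥ z) := by
    rw [hydef, smul_dotProduct, smul_eq_mul, dotProduct_comm]
  have hydx : y ⬝ᵥ (D t *ᵥ w) = -(1/alp) * ((D t *ᵥ w) ⬝ᵥ z) := by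
    rw [hydef, smul_dotProduct, smul_eq_mul, dotProduct_comm]
  have hyy : y ⬝ᵥ y = (1/alp)^2 * (z ⬝ᵥ z) := by
    rw [hydef, smul_dotProduct, dotProduct_smul, smul_eq_mul, smul_eq_mul]; ring
  have hab : (C t *ᵥ x) ⬝ᵥ z + (D t *ᵥ w) ⬝ᵥ z = z ⬝ᵥ z := by
    rw [← add_dotProduct, ← hz]
  have hww : 0 ≤ w ⬝ᵥ w := Finset.sum_nonneg fun i _ => mul_self_nonneg _
  have hwG : w ⬝ᵥ w ≤ G := hδw t ht
  have hVt : V t ≤ V 0 + c := hVt0 t ht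
  have halp' : alp ≠ 0 := ne_of_gt halp
  have hVtx : V t = x ⬝ᵥ (M t *ᵥ x) := rfl
  have hzz : z ⬝ᵥ z ≤ alp * (lam * V t + (alp - mu) * (w ⬝ᵥ w)) := by
    rw [hVtx]
    rw [hcx, hdx, hycx, hydx, hyy] at hq2
    have habu : (1/alp) * ((C t *ᵥ x) ⬝ᵥ z) + (1/alp) * ((D t *ᵥ w) ⬝ᵥ z)
        = (1/alp) * (z ⬝ᵥ z) := by rw [← mul_add, hab]
    have hq3 : 0 ≤ lam * (x ⬝ᵥ (M t *ᵥ x)) + (alp - mu) * (w ⬝ᵥ w)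
        - 2 * ((1/alp) * (z ⬝ᵥ z)) + alp * ((1/alp)^2 * (z ⬝ᵥ z)) := by
      linarith [hq2, habu]
    have h4 := mul_nonneg halp.le hq3
    have e1 : alp * ((1/alp) * (z ⬝ᵥ z)) = z ⬝ᵥ z := by field_simp
    have e2 : alp * (alp * ((1/alp)^2 * (z ⬝ᵥ z))) = z ⬝ᵥ z := by
      field_simp
    nlinarith [h4, e1, e2]
  have hV0 : 0 ≤ V 0 := by
    have := (hMpd 0 h0T).posSemidef.dotProduct_mulVec_nonneg (δx 0)
    simpa [hVdef] using this
  have hlc' : alp * (lam * c) = alp * (mu * G) := by rw [hlc]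
  have hint1 := mul_le_mul_of_nonneg_left hVt (mul_nonneg halp.le hlam.le)
  have hint2 := mul_le_mul_of_nonneg_left hwG (mul_nonneg halp.le (sub_nonneg.2 hma))
  calc z ⬝ᵥ z ≤ alp * (lam * V t + (alp - mu) * (w ⬝ᵥ w)) := hzz
    _ ≤ alp ^ 2 * G + alp * lam * V 0 := by nlinarith [hlc', hint1, hint2]
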